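/- For k > 0, the function h_k : (0,∞) → ℝ, h_k(t) := exp(k·(log t)²), is convex on (0,∞) if and only if k ≥ 1/8. Consequently, the planar exponentiated deviatoric Hencky energy W_eH : GL⁺(2) → ℝ, W_eH(F) := exp(k·(log(λ₁/λ₂))²) with λ₁ ≥ λ₂ the ordered singular values of F, is polyconvex if and only if k ≥ 1/8. -/

import Mathlib

open Matrix MeasureTheory Set

noncomputable section

/-- The space of real 2×2 matrices. -/
abbrev Mat2 := Matrix (Fin 2) (Fin 2) ℝ

/-- Squared Frobenius norm of a 2×2 matrix. -/
def frobSq (F : Mat2) : ℝ := ∑ i, ∑ j, (F i j) ^ 2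

/-- The special orthogonal group SO(2). -/
def SO2 (R : Mat2) : Prop := R.transpose * R = 1 ∧ R.det = 1

/-- The conformal special orthogonal group CSO(2) = (0,∞)·SO(2). -/
def CSO2 (A : Mat2) : Prop := ∃ a : ℝ, 0 < a ∧ ∃ R : Mat2, SO2 R ∧ A = a • R

/-- Conformal invariance of an energy `W : GL⁺(2) → ℝ`. -/
def ConfInv (W : Mat2 → ℝ) : Prop :=
  ∀ F : Mat2, 0 < F.det → ∀ A B : Mat2, CSO2 A → CSO2 B → W (A * F * B) = W F

/-- `l1, l2` are the singular values of `F` (in either order): they are positive and their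
product and sum of squares agree with `det F` and the squared Frobenius norm of `F`. -/
def SingVals (F : Mat2) (l1 l2 : ℝ) : Prop :=
  0 < l1 ∧ 0 < l2 ∧ l1 * l2 = F.det ∧ l1 ^ 2 + l2 ^ 2 = frobSq F

/-- `l1 ≥ l2` are the ordered singular values of `F`. -/
def OrdSingVals (F : Mat2) (l1 l2 : ℝ) : Prop := SingVals F l1 l2 ∧ l2 ≤ l1

/-- The larger singular value of a 2×2 matrix with positive determinant. -/
def sv1 (F : Mat2) : ℝ :=
  Real.sqrt ((frobSq F + Real.sqrt (frobSq F ^ 2 - 4 * F.det ^ 2)) / 2)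

/-- The smaller singular value of a 2×2 matrix with positive determinant. -/
def sv2 (F : Mat2) : ℝ :=
  Real.sqrt ((frobSq F - Real.sqrt (frobSq F ^ 2 - 4 * F.det ^ 2)) / 2)

/-- The distortion 𝕂(F) = ‖F‖²/(2 det F). -/
def Kdist (F : Mat2) : ℝ := frobSq F / (2 * F.det)

/-- Rank-one convexity of an energy on GL⁺(2). -/
def RankOneConvex (W : Mat2 → ℝ) : Prop :=
  ∀ F : Mat2, 0 < F.det → ∀ H : Mat2, H.rank = 1 → 0 < (F + H).det →
    ∀ t : ℝ, 0 ≤ t → t ≤ 1 → W (F + t • H) ≤ (1 - t) * W F + t * W (F + H)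

/-- The gradient (Jacobian matrix) of a map ϑ : ℝ² → ℝ². -/
def gradMat (ϑ : (Fin 2 → ℝ) → (Fin 2 → ℝ)) (x : Fin 2 → ℝ) : Mat2 :=
  Matrix.of fun i j => fderiv ℝ ϑ x (Pi.single j 1) i

/-- Quasiconvexity of an energy on GL⁺(2). -/
def Quasiconvex2 (W : Mat2 → ℝ) : Prop :=
  ∀ Ω : Set (Fin 2 → ℝ), IsOpen Ω → Bornology.IsBounded Ω →
    ∀ F₀ : Mat2, 0 < F₀.det →
    ∀ ϑ : (Fin 2 → ℝ) → (Fin 2 → ℝ), ContDiff ℝ (⊤ : ℕ∞) ϑ → HasCompactSupport ϑ →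
      tsupport ϑ ⊆ Ω → (∀ x ∈ Ω, 0 < (F₀ + gradMat ϑ x).det) →
      W F₀ * (volume Ω).toReal ≤ ∫ x in Ω, W (F₀ + gradMat ϑ x)

/-- Polyconvexity of an energy on GL⁺(2): `W(F) = P(F, det F)` for some convex
function `P : ℝ^{2×2} × ℝ → ℝ ∪ {+∞}`. -/
def Polyconvex (W : Mat2 → ℝ) : Prop :=
  ∃ P : Mat2 × ℝ → EReal,
    (∀ X Y : Mat2 × ℝ, ∀ t : ℝ, 0 ≤ t → t ≤ 1 →
      P (t • X + (1 - t) • Y) ≤ (t : ℝ) * P X + ((1 - t : ℝ) : EReal) * P Y) ∧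
    (∀ F : Mat2, 0 < F.det → (W F : EReal) = P (F, F.det))

/-- The rank-one convex envelope of `W` on GL⁺(2). -/
def RWenv (W : Mat2 → ℝ) (F : Mat2) : ℝ :=
  sSup {y | ∃ w : Mat2 → ℝ, RankOneConvex w ∧ (∀ X : Mat2, 0 < X.det → w X ≤ W X) ∧ y = w F}

/-- The quasiconvex envelope of `W` on GL⁺(2). -/
def QWenv (W : Mat2 → ℝ) (F : Mat2) : ℝ :=
  sSup {y | ∃ w : Mat2 → ℝ, Quasiconvex2 w ∧ (∀ X : Mat2, 0 < X.det → w X ≤ W X) ∧ y = w F}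

/-- The polyconvex envelope of `W` on GL⁺(2). -/
def PWenv (W : Mat2 → ℝ) (F : Mat2) : ℝ :=
  sSup {y | ∃ w : Mat2 → ℝ, Polyconvex w ∧ (∀ X : Mat2, 0 < X.det → w X ≤ W X) ∧ y = w F}

/-- The monotone-convex envelope of `h : [1,∞) → ℝ`. -/
def CmEnv (h : ℝ → ℝ) (t : ℝ) : ℝ :=
  sSup {y | ∃ p : ℝ → ℝ, ConvexOn ℝ (Set.Ici (1 : ℝ)) p ∧ MonotoneOn p (Set.Ici (1 : ℝ)) ∧
    (∀ s : ℝ, 1 ≤ s → p s ≤ h s) ∧ y = p t}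

/-- The convex envelope of `h : [1,∞) → ℝ`. -/
def CEnv (h : ℝ → ℝ) (t : ℝ) : ℝ :=
  sSup {y | ∃ p : ℝ → ℝ, ConvexOn ℝ (Set.Ici (1 : ℝ)) p ∧
    (∀ s : ℝ, 1 ≤ s → p s ≤ h s) ∧ y = p t}

/-- The special orthogonal group SO(n). -/
def SOnN {n : ℕ} (R : Matrix (Fin n) (Fin n) ℝ) : Prop := R.transpose * R = 1 ∧ R.det = 1

/-- The conformal special orthogonal group CSO(n) = (0,∞)·SO(n). -/
def CSOnN {n : ℕ} (A : Matrix (Fin n) (Fin n) ℝ) : Prop :=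
  ∃ a : ℝ, 0 < a ∧ ∃ R : Matrix (Fin n) (Fin n) ℝ, SOnN R ∧ A = a • R

/-- Conformal invariance of an energy `W : GL⁺(n) → ℝ`. -/
def ConfInvN {n : ℕ} (W : Matrix (Fin n) (Fin n) ℝ → ℝ) : Prop :=
  ∀ F : Matrix (Fin n) (Fin n) ℝ, 0 < F.det →
    ∀ A B : Matrix (Fin n) (Fin n) ℝ, CSOnN A → CSOnN B → W (A * F * B) = W F

/-- Rank-one convexity of an energy on GL⁺(n). -/
def RankOneConvexN {n : ℕ} (W : Matrix (Fin n) (Fin n) ℝ → ℝ) : Prop :=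
  ∀ F : Matrix (Fin n) (Fin n) ℝ, 0 < F.det →
    ∀ H : Matrix (Fin n) (Fin n) ℝ, H.rank = 1 → 0 < (F + H).det →
    ∀ t : ℝ, 0 ≤ t → t ≤ 1 → W (F + t • H) ≤ (1 - t) * W F + t * W (F + H)

/-- The gradient (Jacobian matrix) of a map ϑ : ℝⁿ → ℝⁿ. -/
def gradMatN {n : ℕ} (ϑ : (Fin n → ℝ) → (Fin n → ℝ)) (x : Fin n → ℝ) :
    Matrix (Fin n) (Fin n) ℝ :=
  Matrix.of fun i j => fderiv ℝ ϑ x (Pi.single j 1) i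

/-- Quasiconvexity of an energy on GL⁺(n). -/
def QuasiconvexN {n : ℕ} (W : Matrix (Fin n) (Fin n) ℝ → ℝ) : Prop :=
  ∀ Ω : Set (Fin n → ℝ), IsOpen Ω → Bornology.IsBounded Ω →
    ∀ F₀ : Matrix (Fin n) (Fin n) ℝ, 0 < F₀.det →
    ∀ ϑ : (Fin n → ℝ) → (Fin n → ℝ), ContDiff ℝ (⊤ : ℕ∞) ϑ → HasCompactSupport ϑ →
      tsupport ϑ ⊆ Ω → (∀ x ∈ Ω, 0 < (F₀ + gradMatN ϑ x).det) →
      W F₀ * (volume Ω).toReal ≤ ∫ x in Ω, W (F₀ + gradMatN ϑ x)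

/-- The rank-one convex envelope of `W` on GL⁺(n). -/
def RWenvN {n : ℕ} (W : Matrix (Fin n) (Fin n) ℝ → ℝ) (F : Matrix (Fin n) (Fin n) ℝ) : ℝ :=
  sSup {y | ∃ w : Matrix (Fin n) (Fin n) ℝ → ℝ, RankOneConvexN w ∧
    (∀ X : Matrix (Fin n) (Fin n) ℝ, 0 < X.det → w X ≤ W X) ∧ y = w F}

/-- The quasiconvex envelope of `W` on GL⁺(n). -/
def QWenvN {n : ℕ} (W : Matrix (Fin n) (Fin n) ℝ → ℝ) (F : Matrix (Fin n) (Fin n) ℝ) : ℝ :=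
  sSup {y | ∃ w : Matrix (Fin n) (Fin n) ℝ → ℝ, QuasiconvexN w ∧
    (∀ X : Matrix (Fin n) (Fin n) ℝ, 0 < X.det → w X ≤ W X) ∧ y = w F}

end
/-- The planar exponentiated deviatoric Hencky energy `W_eH(F) = exp(k (log(λ₁/λ₂))²)`. -/
noncomputable def WeH (k : ℝ) (F : Mat2) : ℝ := Real.exp (k * (Real.log (sv1 F / sv2 F)) ^ 2)

namespace EH

lemma frobSq_eq (F : Mat2) :
    frobSq F = F 0 0 ^ 2 + F 0 1 ^ 2 + F 1 0 ^ 2 + F 1 1 ^ 2 := by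
  simp [frobSq, Fin.sum_univ_two]; ring

lemma det_eq (F : Mat2) : F.det = F 0 0 * F 1 1 - F 0 1 * F 1 0 := Matrix.det_fin_two F

/-- A convex expression for the largest singular value. -/
noncomputable def NN (F : Mat2) : ℝ :=
  (Real.sqrt ((F 0 0 + F 1 1) ^ 2 + (F 0 1 - F 1 0) ^ 2)
    + Real.sqrt ((F 0 0 - F 1 1) ^ 2 + (F 0 1 + F 1 0) ^ 2)) / 2

lemma NN_nonneg (F : Mat2) : 0 ≤ NN F := by
  unfold NN; positivity

lemma frobSq_add_2det (F : Mat2) :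
    frobSq F + 2 * F.det = (F 0 0 + F 1 1) ^ 2 + (F 0 1 - F 1 0) ^ 2 := by
  rw [frobSq_eq, det_eq]; ring

lemma frobSq_sub_2det (F : Mat2) :
    frobSq F - 2 * F.det = (F 0 0 - F 1 1) ^ 2 + (F 0 1 + F 1 0) ^ 2 := by
  rw [frobSq_eq, det_eq]; ring

lemma disc_eq (F : Mat2) :
    frobSq F ^ 2 - 4 * F.det ^ 2 = (frobSq F + 2 * F.det) * (frobSq F - 2 * F.det) := by ring

lemma frobSq_add_2det_nonneg (F : Mat2) : 0 ≤ frobSq F + 2 * F.det := by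
  rw [frobSq_add_2det]; positivity

lemma frobSq_sub_2det_nonneg (F : Mat2) : 0 ≤ frobSq F - 2 * F.det := by
  rw [frobSq_sub_2det]; positivity

lemma disc_nonneg (F : Mat2) : 0 ≤ frobSq F ^ 2 - 4 * F.det ^ 2 := by
  rw [disc_eq]
  exact mul_nonneg (frobSq_add_2det_nonneg F) (frobSq_sub_2det_nonneg F)

lemma frobSq_nonneg (F : Mat2) : 0 ≤ frobSq F := by
  rw [frobSq_eq]; positivity

lemma NN_sq (F : Mat2) :
    NN F ^ 2 = (frobSq F + Real.sqrt (frobSq F ^ 2 - 4 * F.det ^ 2)) / 2 := by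
  have h1 : Real.sqrt (frobSq F ^ 2 - 4 * F.det ^ 2)
      = Real.sqrt ((F 0 0 + F 1 1) ^ 2 + (F 0 1 - F 1 0) ^ 2)
        * Real.sqrt ((F 0 0 - F 1 1) ^ 2 + (F 0 1 + F 1 0) ^ 2) := by
    rw [disc_eq, frobSq_add_2det, frobSq_sub_2det, Real.sqrt_mul (by positivity)]
  have h2 : Real.sqrt ((F 0 0 + F 1 1) ^ 2 + (F 0 1 - F 1 0) ^ 2) ^ 2
      = (F 0 0 + F 1 1) ^ 2 + (F 0 1 - F 1 0) ^ 2 := Real.sq_sqrt (by positivity)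
  have h3 : Real.sqrt ((F 0 0 - F 1 1) ^ 2 + (F 0 1 + F 1 0) ^ 2) ^ 2
      = (F 0 0 - F 1 1) ^ 2 + (F 0 1 + F 1 0) ^ 2 := Real.sq_sqrt (by positivity)
  rw [NN, h1, frobSq_eq]
  nlinarith [h2, h3]

lemma sv1_eq_NN (F : Mat2) : sv1 F = NN F := by
  rw [sv1, ← NN_sq, Real.sqrt_sq (NN_nonneg F)]

lemma NN_sq_ge_det (F : Mat2) : F.det ≤ NN F ^ 2 := by
  have h := frobSq_sub_2det_nonneg F
  have h2 := Real.sqrt_nonneg (frobSq F ^ 2 - 4 * F.det ^ 2)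
  rw [NN_sq]; linarith

lemma sv2_pos {F : Mat2} (hF : 0 < F.det) : 0 < sv2 F := by
  rw [sv2]
  apply Real.sqrt_pos.2
  have h1 : Real.sqrt (frobSq F ^ 2 - 4 * F.det ^ 2) < Real.sqrt (frobSq F ^ 2) := by
    apply Real.sqrt_lt_sqrt (disc_nonneg F)
    nlinarith
  rw [Real.sqrt_sq (frobSq_nonneg F)] at h1
  linarith

lemma sv1_mul_sv2 {F : Mat2} (hF : 0 < F.det) : sv1 F * sv2 F = F.det := by
  have h1 : sv1 F * sv2 F = Real.sqrt (((frobSq F + Real.sqrt (frobSq F ^ 2 - 4 * F.det ^ 2)) / 2)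
      * ((frobSq F - Real.sqrt (frobSq F ^ 2 - 4 * F.det ^ 2)) / 2)) := by
    rw [sv1, sv2, ← Real.sqrt_mul]
    have := Real.sqrt_nonneg (frobSq F ^ 2 - 4 * F.det ^ 2)
    have := frobSq_nonneg F
    positivity
  have h2 : Real.sqrt (frobSq F ^ 2 - 4 * F.det ^ 2) ^ 2 = frobSq F ^ 2 - 4 * F.det ^ 2 :=
    Real.sq_sqrt (disc_nonneg F)
  have h3 : ((frobSq F + Real.sqrt (frobSq F ^ 2 - 4 * F.det ^ 2)) / 2)
      * ((frobSq F - Real.sqrt (frobSq F ^ 2 - 4 * F.det ^ 2)) / 2) = F.det ^ 2 := by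
    nlinarith
  rw [h1, h3, Real.sqrt_sq hF.le]

lemma ratio_eq {F : Mat2} (hF : 0 < F.det) : sv1 F / sv2 F = NN F ^ 2 / F.det := by
  have h2 := sv2_pos hF
  have h3 := sv1_mul_sv2 hF
  have h1 : sv1 F ≠ 0 := by
    intro h
    rw [h, zero_mul] at h3
    exact hF.ne h3
  rw [← h3, ← sv1_eq_NN, pow_two]
  field_simp

lemma one_le_ratio {F : Mat2} (hF : 0 < F.det) : 1 ≤ NN F ^ 2 / F.det :=
  (one_le_div hF).2 (NN_sq_ge_det F)

lemma WeH_eq (k : ℝ) {F : Mat2} (hF : 0 < F.det) :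
    WeH k F = Real.exp (k * Real.log (NN F ^ 2 / F.det) ^ 2) := by
  rw [WeH, ratio_eq hF]

/-! ### Convexity of `NN` -/

lemma sqrt_cs (a b c e : ℝ) : a * c + b * e ≤ Real.sqrt (a ^ 2 + b ^ 2) * Real.sqrt (c ^ 2 + e ^ 2) := by
  rcases le_or_gt (a * c + b * e) 0 with h | h
  · exact h.trans (by positivity)
  · rw [← Real.sqrt_mul (by positivity)]
    rw [show Real.sqrt ((a ^ 2 + b ^ 2) * (c ^ 2 + e ^ 2)) = Real.sqrt ((a ^ 2 + b ^ 2) * (c ^ 2 + e ^ 2)) from rfl]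
    have : (a * c + b * e) = Real.sqrt ((a * c + b * e) ^ 2) := by
      rw [Real.sqrt_sq h.le]
    rw [this]
    apply Real.sqrt_le_sqrt
    nlinarith [sq_nonneg (a * e - b * c)]

lemma sqrt_tri (a b c e : ℝ) :
    Real.sqrt ((a + c) ^ 2 + (b + e) ^ 2) ≤ Real.sqrt (a ^ 2 + b ^ 2) + Real.sqrt (c ^ 2 + e ^ 2) := by
  have h1 := sqrt_cs a b c e
  have h2 : Real.sqrt (a ^ 2 + b ^ 2) ^ 2 = a ^ 2 + b ^ 2 := Real.sq_sqrt (by positivity)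
  have h3 : Real.sqrt (c ^ 2 + e ^ 2) ^ 2 = c ^ 2 + e ^ 2 := Real.sq_sqrt (by positivity)
  have h4 : (a + c) ^ 2 + (b + e) ^ 2
      ≤ (Real.sqrt (a ^ 2 + b ^ 2) + Real.sqrt (c ^ 2 + e ^ 2)) ^ 2 := by nlinarith
  calc Real.sqrt ((a + c) ^ 2 + (b + e) ^ 2)
      ≤ Real.sqrt ((Real.sqrt (a ^ 2 + b ^ 2) + Real.sqrt (c ^ 2 + e ^ 2)) ^ 2) :=
        Real.sqrt_le_sqrt h4
    _ = _ := Real.sqrt_sq (by positivity)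

lemma sqrt_smul (t a b : ℝ) (ht : 0 ≤ t) :
    Real.sqrt ((t * a) ^ 2 + (t * b) ^ 2) = t * Real.sqrt (a ^ 2 + b ^ 2) := by
  rw [show (t * a) ^ 2 + (t * b) ^ 2 = t ^ 2 * (a ^ 2 + b ^ 2) by ring,
    Real.sqrt_mul (by positivity), Real.sqrt_sq ht]

lemma sqrt_comb {t s a b c e : ℝ} (ht : 0 ≤ t) (hs : 0 ≤ s) :
    Real.sqrt ((t * a + s * c) ^ 2 + (t * b + s * e) ^ 2)
      ≤ t * Real.sqrt (a ^ 2 + b ^ 2) + s * Real.sqrt (c ^ 2 + e ^ 2) := by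
  calc Real.sqrt ((t * a + s * c) ^ 2 + (t * b + s * e) ^ 2)
      ≤ Real.sqrt ((t * a) ^ 2 + (t * b) ^ 2) + Real.sqrt ((s * c) ^ 2 + (s * e) ^ 2) :=
        sqrt_tri _ _ _ _
    _ = _ := by rw [sqrt_smul _ _ _ ht, sqrt_smul _ _ _ hs]

lemma NN_convex {t s : ℝ} (ht : 0 ≤ t) (hs : 0 ≤ s) (X Y : Mat2) :
    NN (t • X + s • Y) ≤ t * NN X + s * NN Y := by
  have happ : ∀ i j, (t • X + s • Y) i j = t * X i j + s * Y i j := by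
    intro i j
    simp [Matrix.add_apply]
  rw [NN, NN, NN, happ, happ, happ, happ]
  have h1 := sqrt_comb (a := X 0 0 + X 1 1) (b := X 0 1 - X 1 0)
    (c := Y 0 0 + Y 1 1) (e := Y 0 1 - Y 1 0) ht hs
  have h2 := sqrt_comb (a := X 0 0 - X 1 1) (b := X 0 1 + X 1 0)
    (c := Y 0 0 - Y 1 1) (e := Y 0 1 + Y 1 0) ht hs
  have e1 : t * X 0 0 + s * Y 0 0 + (t * X 1 1 + s * Y 1 1)
      = t * (X 0 0 + X 1 1) + s * (Y 0 0 + Y 1 1) := by ring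
  have e2 : t * X 0 1 + s * Y 0 1 - (t * X 1 0 + s * Y 1 0)
      = t * (X 0 1 - X 1 0) + s * (Y 0 1 - Y 1 0) := by ring
  have e3 : t * X 0 0 + s * Y 0 0 - (t * X 1 1 + s * Y 1 1)
      = t * (X 0 0 - X 1 1) + s * (Y 0 0 - Y 1 1) := by ring
  have e4 : t * X 0 1 + s * Y 0 1 + (t * X 1 0 + s * Y 1 0)
      = t * (X 0 1 + X 1 0) + s * (Y 0 1 + Y 1 0) := by ring
  rw [e1, e2, e3, e4]
  have := add_le_add h1 h2
  linarith

/-- Cauchy–Schwarz for the quadratic-over-linear function. -/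
lemma cs_div {a b dx dy t : ℝ} (ha : 0 ≤ a) (hb : 0 ≤ b) (hdx : 0 < dx) (hdy : 0 < dy)
    (ht : 0 ≤ t) (ht1 : t ≤ 1) :
    (t * a + (1 - t) * b) ^ 2 / (t * dx + (1 - t) * dy)
      ≤ t * (a ^ 2 / dx) + (1 - t) * (b ^ 2 / dy) := by
  have hz : 0 < t * dx + (1 - t) * dy := by
    rcases eq_or_lt_of_le ht with h | h
    · simp [← h]; linarith
    · nlinarith
  rw [div_le_iff₀ hz]
  have e1 : t * (a ^ 2 / dx) + (1 - t) * (b ^ 2 / dy)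
      = (t * a ^ 2 * dy + (1 - t) * b ^ 2 * dx) / (dx * dy) := by
    field_simp
  rw [e1, div_mul_eq_mul_div, le_div_iff₀ (by positivity)]
  nlinarith [mul_nonneg (mul_nonneg ht (sub_nonneg.2 ht1)) (sq_nonneg (a * dy - b * dx))]

/-! ### Calculus of `h k t = exp (k * (log t)^2)` -/

lemma hasDerivAt_h (k : ℝ) {t : ℝ} (ht : 0 < t) :
    HasDerivAt (fun t : ℝ => Real.exp (k * Real.log t ^ 2))
      (Real.exp (k * Real.log t ^ 2) * (2 * k * Real.log t / t)) t := by
  have h1 : HasDerivAt Real.log t⁻¹ t := Real.hasDerivAt_log ht.ne'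
  have h2 : HasDerivAt (fun t : ℝ => k * Real.log t ^ 2) (k * (2 * Real.log t * t⁻¹)) t :=
    ((h1.pow 2).const_mul k).congr_deriv (by ring)
  have h3 := (h2.exp)
  convert h3 using 1
  field_simp

lemma hasDerivAt_h' (k : ℝ) {t : ℝ} (ht : 0 < t) :
    HasDerivAt (fun t : ℝ => Real.exp (k * Real.log t ^ 2) * (2 * k * Real.log t / t))
      (Real.exp (k * Real.log t ^ 2)
        * ((4 * k ^ 2 * Real.log t ^ 2 - 2 * k * Real.log t + 2 * k) / t ^ 2)) t := by
  have h1 : HasDerivAt Real.log t⁻¹ t := Real.hasDerivAt_log ht.ne'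
  have h2 : HasDerivAt (fun t : ℝ => 2 * k * Real.log t / t)
      ((2 * k * t⁻¹ * t - 2 * k * Real.log t * 1) / t ^ 2) t :=
    ((h1.const_mul (2 * k)).div (hasDerivAt_id t) ht.ne')
  have h3 := (hasDerivAt_h k ht).mul h2
  refine h3.congr_deriv ?_
  field_simp
  ring

lemma convexOn_h {k : ℝ} (hk8 : 1 / 8 ≤ k) :
    ConvexOn ℝ (Set.Ioi (0 : ℝ)) (fun t : ℝ => Real.exp (k * Real.log t ^ 2)) := by
  have hint : interior (Set.Ioi (0 : ℝ)) = Set.Ioi 0 := interior_Ioi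
  apply convexOn_of_hasDerivWithinAt2_nonneg (convex_Ioi 0)
    (f' := fun t => Real.exp (k * Real.log t ^ 2) * (2 * k * Real.log t / t))
    (f'' := fun t => Real.exp (k * Real.log t ^ 2)
      * ((4 * k ^ 2 * Real.log t ^ 2 - 2 * k * Real.log t + 2 * k) / t ^ 2))
  · intro x hx
    exact ((hasDerivAt_h k hx).continuousAt).continuousWithinAt
  · intro x hx
    rw [hint] at hx ⊢
    exact ((hasDerivAt_h k hx).hasDerivWithinAt)
  · intro x hx
    rw [hint] at hx ⊢
    exact ((hasDerivAt_h' k hx).hasDerivWithinAt)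
  · intro x hx
    rw [hint] at hx
    have hx' : (0 : ℝ) < x := hx
    have hkpos : (0 : ℝ) < k := lt_of_lt_of_le (by norm_num) hk8
    have h2 : 0 ≤ 2 * k * Real.log x ^ 2 - Real.log x + 1 := by
      nlinarith [sq_nonneg (Real.log x / 2 - 1),
        mul_nonneg (sub_nonneg.2 hk8) (sq_nonneg (Real.log x))]
    have h1 : 0 ≤ 4 * k ^ 2 * Real.log x ^ 2 - 2 * k * Real.log x + 2 * k := by
      nlinarith [mul_nonneg hkpos.le h2]
    positivity

lemma monotoneOn_h {k : ℝ} (hk : 0 ≤ k) :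
    MonotoneOn (fun t : ℝ => Real.exp (k * Real.log t ^ 2)) (Set.Ici (1 : ℝ)) := by
  have hint : interior (Set.Ici (1 : ℝ)) = Set.Ioi 1 := interior_Ici
  apply monotoneOn_of_deriv_nonneg (convex_Ici 1)
  · intro x hx
    have hx' : (0 : ℝ) < x := lt_of_lt_of_le one_pos hx
    exact ((hasDerivAt_h k hx').continuousAt).continuousWithinAt
  · rw [hint]
    intro x hx
    have hx' : (0 : ℝ) < x := lt_trans one_pos hx
    exact ((hasDerivAt_h k hx').differentiableAt).differentiableWithinAt
  · rw [hint]
    intro x hx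
    have hx1 : (1 : ℝ) < x := hx
    have hx' : (0 : ℝ) < x := lt_trans one_pos hx1
    rw [(hasDerivAt_h k hx').deriv]
    have hlog : 0 ≤ Real.log x := Real.log_nonneg hx1.le
    positivity

/-- A real function monotone on `Ioi 0` has nonnegative derivative there. -/
lemma deriv_nonneg_of_monotoneOn {g : ℝ → ℝ} {c t₀ : ℝ} (ht₀ : 0 < t₀)
    (hm : MonotoneOn g (Set.Ioi 0)) (hd : HasDerivAt g c t₀) : 0 ≤ c := by
  have h1 : Filter.Tendsto (slope g t₀) (nhdsWithin t₀ (Set.Ioi t₀)) (nhds c) := by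
    apply (hasDerivAt_iff_tendsto_slope.mp hd).mono_left
    apply nhdsWithin_mono
    intro y hy
    exact ne_of_gt hy
  apply ge_of_tendsto h1
  filter_upwards [self_mem_nhdsWithin] with y hy
  have hy' : t₀ < y := hy
  rw [slope_def_field]
  apply div_nonneg _ (by linarith)
  have := hm (Set.mem_Ioi.2 ht₀) (Set.mem_Ioi.2 (lt_trans ht₀ hy')) hy'.le
  linarith

lemma k_ge_of_convexOn_h {k : ℝ} (hk : 0 < k)
    (hc : ConvexOn ℝ (Set.Ioi (0 : ℝ)) (fun t : ℝ => Real.exp (k * Real.log t ^ 2))) :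
    1 / 8 ≤ k := by
  by_contra hlt
  push_neg at hlt
  set t₀ : ℝ := Real.exp (1 / (4 * k)) with ht₀def
  have ht₀ : 0 < t₀ := Real.exp_pos _
  have hlog : Real.log t₀ = 1 / (4 * k) := Real.log_exp _
  have hmono : MonotoneOn (deriv (fun t : ℝ => Real.exp (k * Real.log t ^ 2))) (Set.Ioi 0) :=
    hc.monotoneOn_deriv (fun x hx => (hasDerivAt_h k hx).differentiableAt)
  have heq : Set.EqOn (deriv (fun t : ℝ => Real.exp (k * Real.log t ^ 2)))
      (fun t => Real.exp (k * Real.log t ^ 2) * (2 * k * Real.log t / t)) (Set.Ioi 0) := by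
    intro x hx
    exact (hasDerivAt_h k hx).deriv
  have hmono2 : MonotoneOn
      (fun t => Real.exp (k * Real.log t ^ 2) * (2 * k * Real.log t / t)) (Set.Ioi 0) :=
    hmono.congr heq
  have hd := hasDerivAt_h' k ht₀
  have hnn := deriv_nonneg_of_monotoneOn ht₀ hmono2 hd
  have hk' : (4 * k) ≠ 0 := by positivity
  have hA : 4 * k ^ 2 * Real.log t₀ ^ 2 - 2 * k * Real.log t₀ + 2 * k = 2 * k - 1 / 4 := by
    rw [hlog]
    field_simp
    ring
  have hneg : 4 * k ^ 2 * Real.log t₀ ^ 2 - 2 * k * Real.log t₀ + 2 * k < 0 := by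
    rw [hA]; linarith
  have hlast : Real.exp (k * Real.log t₀ ^ 2)
      * ((4 * k ^ 2 * Real.log t₀ ^ 2 - 2 * k * Real.log t₀ + 2 * k) / t₀ ^ 2) < 0 :=
    mul_neg_of_pos_of_neg (Real.exp_pos _) (div_neg_of_neg_of_pos hneg (pow_pos ht₀ 2))
  linarith

/-! ### The polyconvexity witness -/

/-- The polyconvexity witness `P(F, d) = h_k(max(NN(F)^2/d, 1))` for `d > 0`, `⊤` otherwise. -/
noncomputable def Pfun (k : ℝ) (X : Mat2 × ℝ) : EReal :=
  if 0 < X.2 then ((Real.exp (k * Real.log (max (NN X.1 ^ 2 / X.2) 1) ^ 2) : ℝ) : EReal) else ⊤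

lemma Pfun_eq (k : ℝ) {F : Mat2} (hF : 0 < F.det) : (WeH k F : EReal) = Pfun k (F, F.det) := by
  rw [Pfun, if_pos hF]
  have h1 : max (NN F ^ 2 / F.det) 1 = NN F ^ 2 / F.det := max_eq_left (one_le_ratio hF)
  rw [h1, WeH_eq k hF]

lemma mul_Pfun_ne_bot {k t : ℝ} (ht : 0 < t) (X : Mat2 × ℝ) : (t : EReal) * Pfun k X ≠ ⊥ := by
  rw [Pfun]
  split_ifs with h
  · rw [← EReal.coe_mul]
    exact EReal.coe_ne_bot _
  · rw [EReal.coe_mul_top_of_pos ht]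
    simp

lemma Pfun_convex {k : ℝ} (hk8 : 1 / 8 ≤ k) :
    ∀ X Y : Mat2 × ℝ, ∀ t : ℝ, 0 ≤ t → t ≤ 1 →
      Pfun k (t • X + (1 - t) • Y) ≤ (t : ℝ) * Pfun k X + ((1 - t : ℝ) : EReal) * Pfun k Y := by
  intro X Y t ht ht1
  rcases eq_or_lt_of_le ht with rfl | htpos
  · simp only [zero_smul, zero_add, sub_zero, one_smul, EReal.coe_zero, EReal.coe_one,
      zero_mul, one_mul]
    exact le_refl _
  rcases eq_or_lt_of_le ht1 with rfl | ht1pos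
  · simp only [one_smul, sub_self, zero_smul, add_zero, EReal.coe_zero, EReal.coe_one,
      zero_mul, one_mul, mul_zero]
    exact le_refl _
  have hspos : 0 < 1 - t := by linarith
  by_cases hdx : 0 < X.2
  · by_cases hdy : 0 < Y.2
    · -- main case
      have hz2 : (t • X + (1 - t) • Y).2 = t * X.2 + (1 - t) * Y.2 := rfl
      have hz1 : (t • X + (1 - t) • Y).1 = t • X.1 + (1 - t) • Y.1 := rfl
      have hzpos : 0 < (t • X + (1 - t) • Y).2 := by
        rw [hz2]
        have := mul_pos htpos hdx
        have := mul_pos hspos hdy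
        linarith
      rw [Pfun, if_pos hzpos, Pfun, if_pos hdx, Pfun, if_pos hdy,
        ← EReal.coe_mul, ← EReal.coe_mul, ← EReal.coe_add, EReal.coe_le_coe_iff]
      set qX : ℝ := max (NN X.1 ^ 2 / X.2) 1 with hqX
      set qY : ℝ := max (NN Y.1 ^ 2 / Y.2) 1 with hqY
      have hqX1 : 1 ≤ qX := le_max_right _ _
      have hqY1 : 1 ≤ qY := le_max_right _ _
      have hzpos' : 0 < t * X.2 + (1 - t) * Y.2 := by rw [← hz2]; exact hzpos
      -- the key convexity inequality for the argument
      have hkey : max (NN (t • X + (1 - t) • Y).1 ^ 2 / (t • X + (1 - t) • Y).2) 1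
          ≤ t * qX + (1 - t) * qY := by
        apply max_le
        · rw [hz1, hz2]
          have hNle : NN (t • X.1 + (1 - t) • Y.1) ≤ t * NN X.1 + (1 - t) * NN Y.1 :=
            NN_convex htpos.le hspos.le X.1 Y.1
          have hsq : NN (t • X.1 + (1 - t) • Y.1) ^ 2
              ≤ (t * NN X.1 + (1 - t) * NN Y.1) ^ 2 :=
            pow_le_pow_left₀ (NN_nonneg _) hNle 2
          have hstep1 : NN (t • X.1 + (1 - t) • Y.1) ^ 2 / (t * X.2 + (1 - t) * Y.2)
              ≤ (t * NN X.1 + (1 - t) * NN Y.1) ^ 2 / (t * X.2 + (1 - t) * Y.2) := by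
            gcongr
          have hstep2 := cs_div (NN_nonneg X.1) (NN_nonneg Y.1) hdx hdy ht ht1
          have hstep3 : t * (NN X.1 ^ 2 / X.2) + (1 - t) * (NN Y.1 ^ 2 / Y.2)
              ≤ t * qX + (1 - t) * qY := by
            gcongr
            · exact le_max_left _ _
            · exact le_max_left _ _
          linarith
        · nlinarith [mul_le_mul_of_nonneg_left hqX1 htpos.le,
            mul_le_mul_of_nonneg_left hqY1 hspos.le]
      have hZ1 : (1 : ℝ) ≤ max (NN (t • X + (1 - t) • Y).1 ^ 2 / (t • X + (1 - t) • Y).2) 1 :=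
        le_max_right _ _
      have hcomb1 : (1 : ℝ) ≤ t * qX + (1 - t) * qY := le_trans hZ1 hkey
      have hk0 : (0 : ℝ) ≤ k := by linarith
      have hmono := monotoneOn_h hk0 (Set.mem_Ici.2 hZ1) (Set.mem_Ici.2 hcomb1) hkey
      have hconv : ConvexOn ℝ (Set.Ici (1 : ℝ))
          (fun t : ℝ => Real.exp (k * Real.log t ^ 2)) :=
        (convexOn_h hk8).subset (fun x hx => Set.mem_Ioi.2 (lt_of_lt_of_le one_pos hx)) (convex_Ici 1)
      have hjen := hconv.2 (Set.mem_Ici.2 hqX1) (Set.mem_Ici.2 hqY1) htpos.le hspos.le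
        (by ring : t + (1 - t) = 1)
      simp only [smul_eq_mul] at hjen
      exact le_trans hmono hjen
    · have hPY : Pfun k Y = ⊤ := by rw [Pfun, if_neg hdy]
      rw [hPY, EReal.coe_mul_top_of_pos hspos, EReal.add_top_of_ne_bot (mul_Pfun_ne_bot htpos X)]
      exact le_top
  · have hPX : Pfun k X = ⊤ := by rw [Pfun, if_neg hdx]
    rw [hPX, EReal.coe_mul_top_of_pos htpos, EReal.top_add_of_ne_bot (mul_Pfun_ne_bot hspos Y)]
    exact le_top

lemma polyconvex_WeH {k : ℝ} (hk8 : 1 / 8 ≤ k) : Polyconvex (WeH k) :=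
  ⟨Pfun k, Pfun_convex hk8, fun F hF => Pfun_eq k hF⟩

/-! ### From polyconvexity back to convexity of `h k` -/

lemma comb_pos {a b x y : ℝ} (ha : 0 ≤ a) (hb : 0 ≤ b) (hab : a + b = 1)
    (hx : 0 < x) (hy : 0 < y) : 0 < a * x + b * y := by
  rcases eq_or_lt_of_le ha with h | h
  · have hb1 : b = 1 := by linarith
    rw [← h, hb1]
    simpa using hy
  · nlinarith [mul_nonneg hb hy.le]

/-- The diagonal matrix `diag(s, 1)`. -/
noncomputable def Dg (s : ℝ) : Mat2 := Matrix.diagonal ![s, 1]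

lemma Dg_det (s : ℝ) : (Dg s).det = s := by
  rw [Dg, Matrix.det_diagonal, Fin.prod_univ_two]
  simp

lemma Dg_entries (s : ℝ) : Dg s 0 0 = s ∧ Dg s 0 1 = 0 ∧ Dg s 1 0 = 0 ∧ Dg s 1 1 = 1 := by
  refine ⟨?_, ?_, ?_, ?_⟩ <;> simp [Dg, Matrix.diagonal]

lemma NN_Dg {s : ℝ} (hs : 0 < s) : NN (Dg s) = max s 1 := by
  obtain ⟨e1, e2, e3, e4⟩ := Dg_entries s
  rw [NN, e1, e2, e3, e4]
  have h1 : Real.sqrt ((s + 1) ^ 2 + ((0 : ℝ) - 0) ^ 2) = s + 1 := by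
    rw [show ((0 : ℝ) - 0) ^ 2 = 0 by ring, add_zero, Real.sqrt_sq (by linarith)]
  have h2 : Real.sqrt ((s - 1) ^ 2 + ((0 : ℝ) + 0) ^ 2) = |s - 1| := by
    rw [show ((0 : ℝ) + 0) ^ 2 = 0 by ring, add_zero, Real.sqrt_sq_eq_abs]
  rw [h1, h2]
  rcases le_total 1 s with h | h
  · rw [abs_of_nonneg (by linarith), max_eq_left h]; ring
  · rw [abs_of_nonpos (by linarith), max_eq_right h]; ring

lemma WeH_Dg {k s : ℝ} (hs : 0 < s) : WeH k (Dg s) = Real.exp (k * Real.log s ^ 2) := by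
  have hd : 0 < (Dg s).det := by rw [Dg_det]; exact hs
  rw [WeH_eq k hd, NN_Dg hs, Dg_det]
  rcases le_total 1 s with h | h
  · rw [max_eq_left h, show s ^ 2 / s = s by rw [pow_two]; field_simp]
  · rw [max_eq_right h, one_pow, one_div, Real.log_inv, neg_sq]

lemma Dg_comb {a b x y : ℝ} (hab : a + b = 1) : a • Dg x + b • Dg y = Dg (a * x + b * y) := by
  unfold Dg
  ext i j
  fin_cases i <;> fin_cases j <;>
    simp [Matrix.diagonal] <;> linarith

lemma convexOn_of_polyconvex {k : ℝ} (hp : Polyconvex (WeH k)) :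
    ConvexOn ℝ (Set.Ioi (0 : ℝ)) (fun t : ℝ => Real.exp (k * Real.log t ^ 2)) := by
  obtain ⟨P, hPc, hPeq⟩ := hp
  refine ⟨convex_Ioi 0, ?_⟩
  intro x hx y hy a b ha hb hab
  have hx' : (0 : ℝ) < x := hx
  have hy' : (0 : ℝ) < y := hy
  have hz : 0 < a * x + b * y := comb_pos ha hb hab hx' hy'
  have h1 := hPc (Dg x, x) (Dg y, y) a ha (by linarith)
  have hb' : 1 - a = b := by linarith
  rw [hb'] at h1
  have harg : a • ((Dg x, x) : Mat2 × ℝ) + b • ((Dg y, y) : Mat2 × ℝ)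
      = ((Dg (a * x + b * y) : Mat2), a * x + b * y) := by
    rw [Prod.smul_mk, Prod.smul_mk, Prod.mk_add_mk, Dg_comb hab]
    simp [smul_eq_mul]
  rw [harg] at h1
  have hdet : ∀ s : ℝ, 0 < s → P ((Dg s : Mat2), s) = ((Real.exp (k * Real.log s ^ 2) : ℝ) : EReal) := by
    intro s hs
    have hd : 0 < (Dg s).det := by rw [Dg_det]; exact hs
    have h2 := hPeq (Dg s) hd
    rw [Dg_det] at h2
    rw [← h2, WeH_Dg hs]
  rw [hdet _ hz, hdet _ hx', hdet _ hy'] at h1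
  rw [← EReal.coe_mul, ← EReal.coe_mul, ← EReal.coe_add, EReal.coe_le_coe_iff] at h1
  simpa [smul_eq_mul] using h1

end EH


/-- For `k > 0`, the function `h_k(t) = exp(k (log t)²)` is convex on `(0,∞)`
iff `k ≥ 1/8`; consequently the planar exponentiated deviatoric Hencky energy is polyconvex
iff `k ≥ 1/8`. -/
theorem exponentiated_Hencky_polyconvex_iff (k : ℝ) (hk : 0 < k) :
    (ConvexOn ℝ (Set.Ioi (0 : ℝ)) (fun t : ℝ => Real.exp (k * (Real.log t) ^ 2)) ↔ 1 / 8 ≤ k) ∧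
      (Polyconvex (WeH k) ↔ 1 / 8 ≤ k) := by
  constructor
  · exact ⟨fun hc => EH.k_ge_of_convexOn_h hk hc, fun h => EH.convexOn_h h⟩
  · exact ⟨fun hp => EH.k_ge_of_convexOn_h hk (EH.convexOn_of_polyconvex hp),
      fun h => EH.polyconvex_WeH h⟩
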